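/- Let k be a commutative ring, A a commutative k-algebra, p ∈ ℕ and Δ ⊆ ℕ^p a nonempty co-ideal. For all D, E ∈ HS^p_k(A;Δ), the group commutator [D,E] = D∘E∘D*∘E* satisfies ℓ([D,E]) ≥ ℓ(D) + ℓ(E); that is, ([D,E])_α = 0 for every nonzero α ∈ Δ with |α| < ℓ(D) + ℓ(E) (with the convention that the inequality holds trivially when ℓ(D) or ℓ(E) is ∞). -/

import Mathlib

open scoped Classical

namespace HS

/-- multi-indices in `ℕ^p` -/
abbrev MIdx (p : ℕ) := Fin p → ℕ

/-- the total weight `|α|` of a multi-index -/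
def wt {p : ℕ} (α : MIdx p) : ℕ := ∑ i, α i

/-- a non-empty co-ideal of `ℕ^p` -/
def IsCoideal {p : ℕ} (Δ : Set (MIdx p)) : Prop :=
  Δ.Nonempty ∧ ∀ ⦃α : MIdx p⦄, α ∈ Δ → ∀ ⦃β : MIdx p⦄, β ≤ α → β ∈ Δ

/-- Convolution product of two power series, given by their coefficient families:
this is the multiplication of `R[[s]]_Δ` (in terms of representatives). -/
def sconv {p : ℕ} {R : Type*} [NonUnitalNonAssocSemiring R] (f g : MIdx p → R) : MIdx p → R :=
  fun α => ∑ β ∈ Finset.Iic α, f β * g (α - β)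

/-- Applying a series of linear operators to a series of module elements; for an
operator family `f`, `fapply f` is the induced `k[[s]]_Δ`-linear map `f̃ = ∑ f_β s^β`. -/
def fapply {p : ℕ} {k M N : Type*} [Semiring k] [AddCommMonoid M] [AddCommMonoid N]
    [Module k M] [Module k N] (f : MIdx p → (M →ₗ[k] N)) (m : MIdx p → M) : MIdx p → N :=
  fun α => ∑ β ∈ Finset.Iic α, f β (m (α - β))

/-- a series of scalars acting on a series of module elements:
the module structure of `M[[s]]_Δ` over `A[[s]]_Δ` (in terms of representatives). -/
def smul' {p : ℕ} {A M : Type*} [Semiring A] [AddCommMonoid M] [Module A M]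
    (a : MIdx p → A) (m : MIdx p → M) : MIdx p → M :=
  fun α => ∑ β ∈ Finset.Iic α, a β • m (α - β)

/-- the unit (delta) series `1` -/
def one' {p : ℕ} {R : Type*} [Zero R] [One R] : MIdx p → R :=
  fun α => if α = 0 then 1 else 0

/-- `D` is a `(p,Δ)`-variate Hasse–Schmidt derivation of `A` over `k`:
`D_0 = id` and the Leibniz rule `D_α(xy) = ∑_{β+γ=α} D_β(x) D_γ(y)` for `α ∈ Δ`. -/
def IsHS (k A : Type*) [CommRing k] [CommRing A] [Algebra k A] {p : ℕ}
    (Δ : Set (MIdx p)) (D : MIdx p → Module.End k A) : Prop :=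
  D 0 = 1 ∧ ∀ α ∈ Δ, ∀ x y : A,
    D α (x * y) = ∑ β ∈ Finset.Iic α, D β x * D (α - β) y

/-- `ℓ(D) = min{ |β| : β ∈ Δ, β ≠ 0, D_β ≠ 0 } ∈ ℕ∞`, with `ℓ(𝕀) = ⊤ = ∞`. -/
noncomputable def ell {k A : Type*} [CommRing k] [CommRing A] [Algebra k A] {p : ℕ}
    (Δ : Set (MIdx p)) (D : MIdx p → Module.End k A) : ℕ∞ :=
  sInf {n : ℕ∞ | ∃ β ∈ Δ, β ≠ 0 ∧ D β ≠ 0 ∧ n = (wt β : ℕ∞)}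

lemma wt_mono {p : ℕ} {β α : MIdx p} (h : β ≤ α) : wt β ≤ wt α :=
  Finset.sum_le_sum fun i _ => h i

lemma wt_add {p : ℕ} (β γ : MIdx p) : wt (β + γ) = wt β + wt γ := by
  simp [wt, Finset.sum_add_distrib]

lemma sconv_congr_left {p : ℕ} {R : Type*} [NonUnitalNonAssocSemiring R]
    {f f' g : MIdx p → R} {α : MIdx p} (h : ∀ β ≤ α, f β = f' β) :
    sconv f g α = sconv f' g α :=
  Finset.sum_congr rfl fun β hβ => by rw [h β (Finset.mem_Iic.mp hβ)]

lemma sconv_one'_right {p : ℕ} {R : Type*} [NonAssocSemiring R]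
    {f g : MIdx p → R} {α : MIdx p} (h : ∀ β ≤ α, g β = one' β) :
    sconv f g α = f α := by
  unfold sconv
  rw [Finset.sum_eq_single α]
  · rw [h (α - α) tsub_le_self, tsub_self]
    simp [one']
  · intro β hβ hne
    rw [h (α - β) tsub_le_self]
    have hnz : α - β ≠ 0 := by
      rw [Ne, tsub_eq_zero_iff_le]
      intro hle
      exact hne (le_antisymm (Finset.mem_Iic.mp hβ) hle)
    simp [one', hnz]
  · intro h'
    exact absurd (Finset.mem_Iic.mpr le_rfl) h'

lemma sconv_assoc {p : ℕ} {R : Type*} [NonUnitalSemiring R]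
    (f g h : MIdx p → R) (α : MIdx p) :
    sconv (sconv f g) h α = sconv f (sconv g h) α := by
  unfold sconv
  simp_rw [Finset.sum_mul, Finset.mul_sum]
  rw [Finset.sum_sigma', Finset.sum_sigma']
  refine Finset.sum_nbij' (fun i => ⟨i.2, i.1 - i.2⟩) (fun j => ⟨j.1 + j.2, j.1⟩)
    ?_ ?_ ?_ ?_ ?_
  · rintro ⟨β, γ⟩ hi
    rw [Finset.mem_sigma, Finset.mem_Iic, Finset.mem_Iic] at hi ⊢
    simp only [Finset.mem_Iic]
    exact ⟨hi.2.trans hi.1, tsub_le_tsub_right hi.1 γ⟩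
  · rintro ⟨β, γ⟩ hj
    rw [Finset.mem_sigma, Finset.mem_Iic, Finset.mem_Iic] at hj ⊢
    simp only [Finset.mem_Iic]
    refine ⟨?_, le_self_add⟩
    calc β + γ ≤ β + (α - β) := add_le_add_right hj.2 β
      _ = α := add_tsub_cancel_of_le hj.1
  · rintro ⟨β, γ⟩ hi
    rw [Finset.mem_sigma, Finset.mem_Iic, Finset.mem_Iic] at hi
    have h := add_tsub_cancel_of_le hi.2
    simp [h]
  · rintro ⟨β, γ⟩ hj
    simp [add_tsub_cancel_left]
  · rintro ⟨β, γ⟩ hi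
    rw [Finset.mem_sigma, Finset.mem_Iic, Finset.mem_Iic] at hi
    have h1 : α - γ - (β - γ) = α - β := by
      rw [tsub_tsub, add_tsub_cancel_of_le hi.2]
    simp only [h1, mul_assoc]

/-- For Hasse–Schmidt derivations `D, E ∈ HS^p_k(A;Δ)` with inverses
`D*, E*`, the group commutator `[D,E] = D∘E∘D*∘E*` satisfies `ℓ([D,E]) ≥ ℓ(D) + ℓ(E)`,
i.e. `[D,E]_α = 0` for every nonzero `α ∈ Δ` with `|α| < ℓ(D) + ℓ(E)` (in `ℕ∞`). -/
theorem stmt6 (k A : Type*) [CommRing k] [CommRing A] [Algebra k A]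
    (p : ℕ) (Δ : Set (MIdx p)) (hΔ : IsCoideal Δ)
    (D E Ds Es : MIdx p → Module.End k A)
    (hD : IsHS k A Δ D) (hE : IsHS k A Δ E)
    (hDs : IsHS k A Δ Ds) (hEs : IsHS k A Δ Es)
    (hD1 : ∀ α ∈ Δ, sconv D Ds α = (one' : MIdx p → Module.End k A) α)
    (hD2 : ∀ α ∈ Δ, sconv Ds D α = (one' : MIdx p → Module.End k A) α)
    (hE1 : ∀ α ∈ Δ, sconv E Es α = (one' : MIdx p → Module.End k A) α)
    (hE2 : ∀ α ∈ Δ, sconv Es E α = (one' : MIdx p → Module.End k A) α) :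
    ∀ α ∈ Δ, α ≠ 0 → (wt α : ℕ∞) < ell Δ D + ell Δ E →
      sconv (sconv (sconv D E) Ds) Es α = 0 := by
  intro α hα hα0 hlt
  -- `D∘E` and `E∘D` agree in all degrees `≤ α`
  have hswap : ∀ γ ≤ α, sconv D E γ = sconv E D γ := by
    intro γ hγ
    have hcomm : ∀ β ≤ γ, D β * E (γ - β) = E (γ - β) * D β := by
      intro β hβ
      by_cases hb0 : β = 0
      · subst hb0; rw [hD.1, one_mul, mul_one]
      by_cases hg0 : γ - β = 0
      · rw [hg0, hE.1, one_mul, mul_one]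
      by_cases hDb : D β = 0
      · rw [hDb, zero_mul, mul_zero]
      by_cases hEg : E (γ - β) = 0
      · rw [hEg, zero_mul, mul_zero]
      exfalso
      have h1 : ell Δ D ≤ (wt β : ℕ∞) :=
        sInf_le ⟨β, hΔ.2 hα (hβ.trans hγ), hb0, hDb, rfl⟩
      have h2 : ell Δ E ≤ (wt (γ - β) : ℕ∞) :=
        sInf_le ⟨γ - β, hΔ.2 hα (tsub_le_self.trans hγ), hg0, hEg, rfl⟩
      have hwt : wt β + wt (γ - β) = wt γ := by
        rw [← wt_add, add_tsub_cancel_of_le hβ]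
      have : ell Δ D + ell Δ E ≤ (wt α : ℕ∞) := by
        calc ell Δ D + ell Δ E ≤ (wt β : ℕ∞) + (wt (γ - β) : ℕ∞) := add_le_add h1 h2
          _ = ((wt β + wt (γ - β) : ℕ) : ℕ∞) := by rw [Nat.cast_add]
          _ = (wt γ : ℕ∞) := by rw [hwt]
          _ ≤ (wt α : ℕ∞) := by exact_mod_cast wt_mono hγ
      exact absurd (lt_of_lt_of_le hlt this) (lt_irrefl _)
    calc sconv D E γ = ∑ β ∈ Finset.Iic γ, E (γ - β) * D β :=
          Finset.sum_congr rfl fun β hβ => hcomm β (Finset.mem_Iic.mp hβ)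
      _ = sconv E D γ := by
          unfold sconv
          refine Finset.sum_nbij' (fun β => γ - β) (fun β => γ - β) ?_ ?_ ?_ ?_ ?_
          · intro β hβ; exact Finset.mem_Iic.mpr tsub_le_self
          · intro β hβ; exact Finset.mem_Iic.mpr tsub_le_self
          · intro β hβ; exact tsub_tsub_cancel_of_le (Finset.mem_Iic.mp hβ)
          · intro β hβ; exact tsub_tsub_cancel_of_le (Finset.mem_Iic.mp hβ)
          · intro β hβ
            rw [tsub_tsub_cancel_of_le (Finset.mem_Iic.mp hβ)]
  calc sconv (sconv (sconv D E) Ds) Es α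
      = sconv (sconv (sconv E D) Ds) Es α :=
        sconv_congr_left fun β hβ =>
          sconv_congr_left fun γ hγ => hswap γ (hγ.trans hβ)
    _ = sconv (sconv E (sconv D Ds)) Es α :=
        sconv_congr_left fun β _ => sconv_assoc E D Ds β
    _ = sconv E Es α :=
        sconv_congr_left fun β hβ =>
          sconv_one'_right fun γ hγ => hD1 γ (hΔ.2 hα (hγ.trans (hβ.trans le_rfl)))
    _ = one' α := hE1 α hα
    _ = 0 := by simp [one', hα0]

end HS
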